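/- For integers m ≥ 1, n ≥ 0, and k ≥ 1, the absorption/extraction identity holds: k · C(n,k;m) = n · sum over i from 1 to m of i · C(n-1, k-i; m), where C(n-1,j;m) = 0 for j < 0. -/

import Mathlib

open Polynomial Finset

/-- Polynomial (extended binomial) coefficient: the coefficient of `t^k` in
`(1 + t + ⋯ + t^m)^n`, defined to be `0` for negative `k`. -/
noncomputable def pc (m n : ℕ) (k : ℤ) : ℤ :=
  if 0 ≤ k then
    ((∑ i ∈ Finset.range (m + 1), (Polynomial.X : Polynomial ℤ) ^ i) ^ n).coeff k.toNat
  else 0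

theorem pc_absorption (m n k : ℕ) (hm : 1 ≤ m) (hk : 1 ≤ k) :
    (k : ℤ) * pc m n k = (n : ℤ) * ∑ i ∈ Finset.Icc 1 m, (i : ℤ) * pc m (n - 1) ((k : ℤ) - i) := by
  set p : Polynomial ℤ := ∑ i ∈ Finset.range (m + 1), X ^ i with hp
  have hins : Finset.range (m + 1) = insert 0 (Finset.Icc 1 m) := by
    ext x; simp [Finset.mem_range, Finset.mem_Icc]; omega
  have hderiv : derivative p = ∑ i ∈ Finset.Icc 1 m, C (i : ℤ) * X ^ (i - 1) := by
    rw [hp, map_sum, hins, Finset.sum_insert (by simp)]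
    simp only [pow_zero, derivative_one, zero_add]
    apply Finset.sum_congr rfl
    intro i hi
    rw [derivative_X_pow]
  -- coefficient of derivative at k-1
  have h1 : (derivative (p ^ n)).coeff (k - 1) = (p ^ n).coeff k * k := by
    rw [coeff_derivative, show k - 1 + 1 = k from by omega]
    congr 1
    omega
  have h2 : derivative (p ^ n) = C (n : ℤ) * p ^ (n - 1) * derivative p := by
    rw [derivative_pow]
  have h3 : (C (n : ℤ) * p ^ (n - 1) * derivative p).coeff (k - 1)
      = (n : ℤ) * ∑ i ∈ Finset.Icc 1 m, (i : ℤ) * pc m (n - 1) ((k : ℤ) - i) := by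
    rw [mul_assoc, coeff_C_mul]
    congr 1
    rw [hderiv, Finset.mul_sum, finset_sum_coeff]
    apply Finset.sum_congr rfl
    intro i hi
    simp only [Finset.mem_Icc] at hi
    rw [show p ^ (n - 1) * (C (i : ℤ) * X ^ (i - 1)) = C (i : ℤ) * (p ^ (n - 1) * X ^ (i - 1)) by ring,
      coeff_C_mul, coeff_mul_X_pow']
    unfold pc
    congr 1
    by_cases h : i ≤ k
    · rw [if_pos (by omega), if_pos (by omega), hp]
      congr 1
      omega
    · rw [if_neg (by omega), if_neg (by omega)]
  have hkpos : (0:ℤ) ≤ (k:ℤ) := by positivity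
  have hpc : pc m n k = (p ^ n).coeff k := by
    unfold pc; rw [if_pos hkpos, hp]; simp
  rw [hpc, ← h3, ← h2, h1]
  ring
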